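/- Existence of a periodic (limit-cycle) solution for the hysteretic hybrid system on two agents: for the system ẋ₁ = q₂ − q₁, ẋ₂ = q₁ − q₂ with hysteretic jump rule and fixed q₁(0,0) = kΔ (k ∈ ℤ), the solution with initial condition x(0,0) = (kΔ − Δ/4, kΔ + 3Δ/4), q(0,0) = (kΔ, kΔ + Δ) satisfies z(9/4, 3) = z(1/4, 1); i.e., the solution reaches a periodic orbit of period 2 (in continuous time) in finite time, and in particular does not converge to the set of equilibria. -/

import Mathlib

open Matrix

/-- finite-time limit cycle for the two-agent hysteretic hybrid
system `ẋ₁ = q₂ − q₁`, `ẋ₂ = q₁ − q₂` (i.e. `ẋ = −Lq` with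
`L = [[1,−1],[−1,1]]`).  For the initial condition
`x(0,0) = (kΔ − Δ/4, kΔ + 3Δ/4)`, `q(0,0) = (kΔ, kΔ + Δ)`, the (unique)
solution jumps at times `1/4`, `5/4`, `9/4` and satisfies
`z(9/4, 3) = z(1/4, 1)`: a periodic orbit is reached in finite time, so the
solution does not converge to the set of equilibria. -/
theorem hybrid_limit_cycle (Δ : ℝ) (hΔ : 0 < Δ) (k : ℤ)
    (L : Matrix (Fin 2) (Fin 2) ℝ) (hL : L = !![1, -1; -1, 1])
    (τ : ℕ → ℝ) (hτ0 : τ 0 = 0) (hτ : Monotone τ)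
    (x : ℕ → ℝ → Fin 2 → ℝ) (q : ℕ → Fin 2 → ℝ)
    (hx0 : x 0 0 = ![k * Δ - Δ / 4, k * Δ + 3 * Δ / 4])
    (hq0 : q 0 = ![k * Δ, k * Δ + Δ])
    (hflow : ∀ j, ∀ s ∈ Set.Icc (τ j) (τ (j + 1)),
      x j s = x j (τ j) + (s - τ j) • (-(L.mulVec (q j))))
    (hC : ∀ j, ∀ s ∈ Set.Ico (τ j) (τ (j + 1)), ∀ i, |x j s i - q j i| < Δ / 2)
    (hjumpx : ∀ j, x (j + 1) (τ (j + 1)) = x j (τ (j + 1)))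
    (hjumpq : ∀ j i, q (j + 1) i =
      if q j i + Δ / 2 ≤ x j (τ (j + 1)) i then q j i + Δ / 2
      else if x j (τ (j + 1)) i ≤ q j i - Δ / 2 then q j i - Δ / 2
      else q j i)
    (hjumpD : ∀ j, ∃ i, x j (τ (j + 1)) i ≤ q j i - Δ / 2 ∨
      q j i + Δ / 2 ≤ x j (τ (j + 1)) i) :
    τ 1 = 1 / 4 ∧ τ 2 = 5 / 4 ∧ τ 3 = 9 / 4 ∧
      x 3 (9 / 4) = x 1 (1 / 4) ∧ q 3 = q 1 := by
  have hτ01 : τ 0 ≤ τ 1 := hτ (by norm_num)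
  have hτ12 : τ 1 ≤ τ 2 := hτ (by norm_num)
  have hτ23 : τ 2 ≤ τ 3 := hτ (by norm_num)
  have hv : ∀ a b : ℝ, -(L.mulVec ![a, b]) = ![b - a, a - b] := by
    intro a b
    subst hL
    funext i
    fin_cases i <;>
      simp [Matrix.mulVec, dotProduct, Fin.sum_univ_two] <;> ring
  have hflow' : ∀ j (a b : ℝ), q j = ![a, b] →
      ∀ s, τ j ≤ s → s ≤ τ (j + 1) → ∀ i,
      x j s i = x j (τ j) i + (s - τ j) * (![b - a, a - b] i) := by
    intro j a b hq s hs1 hs2 i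
    have h := hflow j s ⟨hs1, hs2⟩
    rw [hq, hv] at h
    rw [h]
    simp only [Pi.add_apply, Pi.smul_apply, smul_eq_mul]
  -- Stage 0
  have ht1le : τ 1 ≤ 1 / 4 := by
    by_contra h
    push_neg at h
    have hCc := hC 0 (1 / 4) ⟨by rw [hτ0]; norm_num, h⟩ 1
    have hx := hflow' 0 (k * Δ) (k * Δ + Δ) hq0 (1 / 4)
      (by rw [hτ0]; norm_num) h.le 1
    rw [hτ0, hx0] at hx
    simp only [Matrix.cons_val_one, Matrix.head_cons, Matrix.cons_val_zero] at hx
    rw [hx, hq0] at hCc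
    simp only [Matrix.cons_val_one, Matrix.head_cons, Matrix.cons_val_zero] at hCc
    rw [abs_lt] at hCc
    have := hCc.1
    linarith
  have ht1ge : (1 / 4 : ℝ) ≤ τ 1 := by
    have hτ1pos : 0 ≤ τ 1 := by rw [← hτ0]; exact hτ01
    obtain ⟨i, hi⟩ := hjumpD 0
    have hx := hflow' 0 (k * Δ) (k * Δ + Δ) hq0 (τ 1) hτ01 le_rfl i
    rw [hτ0, hx0] at hx
    fin_cases i <;>
      simp only [Fin.isValue, Fin.mk_zero, Fin.mk_one, Matrix.cons_val_zero, Matrix.cons_val_one, Matrix.head_cons] at hx hi <;>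
      rw [hx, hq0] at hi <;>
      simp only [Fin.isValue, Fin.mk_zero, Fin.mk_one, Matrix.cons_val_zero, Matrix.cons_val_one, Matrix.head_cons] at hi <;>
      rcases hi with h | h <;>
      first
        | exact _root_.le_of_mul_le_mul_right (by linarith) hΔ
        | linarith [mul_nonneg hτ1pos hΔ.le,
            mul_le_mul_of_nonneg_right ht1le hΔ.le]
  have ht1 : τ 1 = 1 / 4 := le_antisymm ht1le ht1ge
  have hXτ1 : x 0 (τ 1) = ![k * Δ, k * Δ + Δ / 2] := by
    funext i
    have hx := hflow' 0 (k * Δ) (k * Δ + Δ) hq0 (τ 1) hτ01 le_rfl i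
    rw [hτ0, hx0] at hx
    fin_cases i <;>
      simp only [Fin.isValue, Fin.mk_zero, Fin.mk_one, Matrix.cons_val_zero, Matrix.cons_val_one, Matrix.head_cons] at hx ⊢ <;>
      rw [hx, ht1] <;> ring
  have hq1 : q 1 = ![k * Δ, k * Δ + Δ / 2] := by
    funext i
    have h := hjumpq 0 i
    rw [hXτ1, hq0] at h
    fin_cases i <;>
      simp only [Fin.isValue, Fin.mk_zero, Fin.mk_one, Matrix.cons_val_zero, Matrix.cons_val_one, Matrix.head_cons] at h ⊢
    · erw [if_neg (by linarith), if_neg (by linarith)] at h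
      exact h
    · erw [if_neg (by linarith), if_pos (by linarith)] at h
      rw [h]; ring
  have hx1τ1 : x 1 (τ 1) = ![k * Δ, k * Δ + Δ / 2] := by
    rw [hjumpx 0, hXτ1]
  -- Stage 1
  have ht2le : τ 2 ≤ 5 / 4 := by
    by_contra h
    push_neg at h
    have hCc := hC 1 (5 / 4) ⟨by rw [ht1]; norm_num, h⟩ 0
    have hx := hflow' 1 (k * Δ) (k * Δ + Δ / 2) hq1 (5 / 4)
      (by rw [ht1]; norm_num) h.le 0
    rw [hx1τ1, ht1] at hx
    simp only [Fin.isValue, Matrix.cons_val_zero] at hx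
    rw [hx, hq1] at hCc
    simp only [Fin.isValue, Matrix.cons_val_zero] at hCc
    rw [abs_lt] at hCc
    have := hCc.2
    linarith
  have ht2ge : (5 / 4 : ℝ) ≤ τ 2 := by
    have hτ2ge : (1 / 4 : ℝ) ≤ τ 2 := by rw [← ht1]; exact hτ12
    obtain ⟨i, hi⟩ := hjumpD 1
    have hx := hflow' 1 (k * Δ) (k * Δ + Δ / 2) hq1 (τ 2) hτ12 le_rfl i
    rw [hx1τ1, ht1] at hx
    fin_cases i <;>
      simp only [Fin.isValue, Fin.mk_zero, Fin.mk_one, Matrix.cons_val_zero, Matrix.cons_val_one, Matrix.head_cons] at hx hi <;>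
      rw [hx, hq1] at hi <;>
      simp only [Fin.isValue, Fin.mk_zero, Fin.mk_one, Matrix.cons_val_zero, Matrix.cons_val_one, Matrix.head_cons] at hi <;>
      rcases hi with h | h <;>
      first
        | exact _root_.le_of_mul_le_mul_right (by linarith) hΔ
        | linarith [mul_le_mul_of_nonneg_right hτ2ge hΔ.le]
  have ht2 : τ 2 = 5 / 4 := le_antisymm ht2le ht2ge
  have hXτ2 : x 1 (τ 2) = ![k * Δ + Δ / 2, k * Δ] := by
    funext i
    have hx := hflow' 1 (k * Δ) (k * Δ + Δ / 2) hq1 (τ 2) hτ12 le_rfl i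
    rw [hx1τ1, ht1] at hx
    fin_cases i <;>
      simp only [Fin.isValue, Fin.mk_zero, Fin.mk_one, Matrix.cons_val_zero, Matrix.cons_val_one, Matrix.head_cons] at hx ⊢ <;>
      rw [hx, ht2] <;> ring
  have hq2 : q 2 = ![k * Δ + Δ / 2, k * Δ] := by
    funext i
    have h := hjumpq 1 i
    rw [hXτ2, hq1] at h
    fin_cases i <;>
      simp only [Fin.isValue, Fin.mk_zero, Fin.mk_one, Matrix.cons_val_zero, Matrix.cons_val_one, Matrix.head_cons] at h ⊢
    · erw [if_pos (by linarith)] at h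
      exact h
    · erw [if_neg (by linarith), if_pos (by linarith)] at h
      rw [h]; ring
  have hx2τ2 : x 2 (τ 2) = ![k * Δ + Δ / 2, k * Δ] := by
    rw [hjumpx 1, hXτ2]
  -- Stage 2
  have ht3le : τ 3 ≤ 9 / 4 := by
    by_contra h
    push_neg at h
    have hCc := hC 2 (9 / 4) ⟨by rw [ht2]; norm_num, h⟩ 0
    have hx := hflow' 2 (k * Δ + Δ / 2) (k * Δ) hq2 (9 / 4)
      (by rw [ht2]; norm_num) h.le 0
    rw [hx2τ2, ht2] at hx
    simp only [Fin.isValue, Matrix.cons_val_zero] at hx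
    rw [hx, hq2] at hCc
    simp only [Fin.isValue, Matrix.cons_val_zero] at hCc
    rw [abs_lt] at hCc
    have := hCc.1
    linarith
  have ht3ge : (9 / 4 : ℝ) ≤ τ 3 := by
    have hτ3ge : (5 / 4 : ℝ) ≤ τ 3 := by rw [← ht2]; exact hτ23
    obtain ⟨i, hi⟩ := hjumpD 2
    have hx := hflow' 2 (k * Δ + Δ / 2) (k * Δ) hq2 (τ 3) hτ23 le_rfl i
    rw [hx2τ2, ht2] at hx
    fin_cases i <;>
      simp only [Fin.isValue, Fin.mk_zero, Fin.mk_one, Matrix.cons_val_zero, Matrix.cons_val_one, Matrix.head_cons] at hx hi <;>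
      rw [hx, hq2] at hi <;>
      simp only [Fin.isValue, Fin.mk_zero, Fin.mk_one, Matrix.cons_val_zero, Matrix.cons_val_one, Matrix.head_cons] at hi <;>
      rcases hi with h | h <;>
      first
        | exact _root_.le_of_mul_le_mul_right (by linarith) hΔ
        | linarith [mul_le_mul_of_nonneg_right hτ3ge hΔ.le]
  have ht3 : τ 3 = 9 / 4 := le_antisymm ht3le ht3ge
  have hXτ3 : x 2 (τ 3) = ![k * Δ, k * Δ + Δ / 2] := by
    funext i
    have hx := hflow' 2 (k * Δ + Δ / 2) (k * Δ) hq2 (τ 3) hτ23 le_rfl i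
    rw [hx2τ2, ht2] at hx
    fin_cases i <;>
      simp only [Fin.isValue, Fin.mk_zero, Fin.mk_one, Matrix.cons_val_zero, Matrix.cons_val_one, Matrix.head_cons] at hx ⊢ <;>
      rw [hx, ht3] <;> ring
  have hq3 : q 3 = ![k * Δ, k * Δ + Δ / 2] := by
    funext i
    have h := hjumpq 2 i
    rw [hXτ3, hq2] at h
    fin_cases i <;>
      simp only [Fin.isValue, Fin.mk_zero, Fin.mk_one, Matrix.cons_val_zero, Matrix.cons_val_one, Matrix.head_cons] at h ⊢
    · erw [if_neg (by linarith), if_pos (by linarith)] at h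
      rw [h]; ring
    · erw [if_pos (by linarith)] at h
      exact h
  have hx3 : x 3 (τ 3) = ![k * Δ, k * Δ + Δ / 2] := by
    rw [hjumpx 2, hXτ3]
  refine ⟨ht1, ht2, ht3, ?_, ?_⟩
  · rw [← ht3, ← ht1, hx3, hx1τ1]
  · rw [hq3, hq1]
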